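/- Let L > 0, γ > 0, p₀ ≥ 1, and β* ∈ ℝ^p with β*_j ≠ 0 for j ≤ p₀ and β*_j = 0 for j > p₀ (so β* ≠ 0). Then the function I(τ) = τ·( Σ_{j=1}^p |β*_j|^γ + Σ_{j=1}^{p₀} B_L(β*_j/τ)/|β*_j|^γ ) attains its minimum over τ > 0 at a unique point τ* > 0. -/

import Mathlib

noncomputable def berhu (L z : ℝ) : ℝ := if |z| ≤ L then |z| else (z ^ 2 + L ^ 2) / (2 * L)

noncomputable def Qb (L b σ : ℝ) : ℝ := (b ^ 2 / σ + L ^ 2 * σ) / (2 * L)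

lemma Qb_nonneg {L b σ : ℝ} (hL : 0 < L) (hσ : 0 < σ) : 0 ≤ Qb L b σ := by
  unfold Qb; positivity

lemma Qb_ge {L b σ : ℝ} (hL : 0 < L) (hσ : 0 < σ) : b ^ 2 / (2 * L * σ) ≤ Qb L b σ := by
  have h : Qb L b σ - b ^ 2 / (2 * L * σ) = L * σ / 2 := by
    unfold Qb; field_simp; ring
  nlinarith [mul_pos hL hσ]

lemma berhu_mul {L b τ : ℝ} (hL : 0 < L) (hb : b ≠ 0) (hτ : 0 < τ) :
    τ * berhu L (b / τ) = Qb L b (min τ (|b| / L)) := by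
  have hab : 0 < |b| := abs_pos.mpr hb
  have hbb : b ^ 2 = |b| ^ 2 := (sq_abs b).symm
  unfold berhu Qb
  rw [abs_div, abs_of_pos hτ]
  by_cases h : |b| / τ ≤ L
  · rw [if_pos h]
    rw [div_le_iff₀ hτ] at h
    have ht : |b| / L ≤ τ := by rw [div_le_iff₀ hL]; linarith
    rw [min_eq_right ht]
    field_simp
    nlinarith [hbb]
  · rw [if_neg h]
    push_neg at h
    rw [lt_div_iff₀ hτ] at h
    have ht : τ ≤ |b| / L := by rw [le_div_iff₀ hL]; linarith
    rw [min_eq_left ht]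
    field_simp

lemma Qb_anti {L b x y : ℝ} (hL : 0 < L) (hx : 0 < x) (hxy : x ≤ y) (hy : y ≤ |b| / L) :
    Qb L b y ≤ Qb L b x := by
  have hy0 : 0 < y := lt_of_lt_of_le hx hxy
  have hbb : b ^ 2 = |b| ^ 2 := (sq_abs b).symm
  have h2 : Qb L b x - Qb L b y = (y - x) * (b ^ 2 - L ^ 2 * (x * y)) / (2 * L * (x * y)) := by
    unfold Qb; field_simp; ring
  have hb2 : L ^ 2 * (x * y) ≤ b ^ 2 := by
    rw [le_div_iff₀ hL] at hy
    have h3 : y * L * (y * L) ≤ |b| * |b| := mul_le_mul hy hy (by positivity) (abs_nonneg b)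
    nlinarith [h3, mul_nonneg (mul_nonneg hy0.le (sq_nonneg L)) (sub_nonneg.mpr hxy)]
  have : 0 ≤ (y - x) * (b ^ 2 - L ^ 2 * (x * y)) / (2 * L * (x * y)) :=
    div_nonneg (mul_nonneg (by linarith) (by linarith)) (by positivity)
  linarith

lemma Qb_strict_mid {L b x y : ℝ} (hL : 0 < L) (hb : b ≠ 0) (hx : 0 < x) (hxy : x < y) :
    Qb L b ((x + y) / 2) < (Qb L b x + Qb L b y) / 2 := by
  have hy : 0 < y := hx.trans hxy
  have h2 : (Qb L b x + Qb L b y) / 2 - Qb L b ((x + y) / 2)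
      = b ^ 2 * (x - y) ^ 2 / (2 * (2 * L * (x * (y * (x + y))))) := by
    unfold Qb; field_simp; ring
  have hb2 : 0 < b ^ 2 := by positivity
  have : 0 < b ^ 2 * (x - y) ^ 2 / (2 * (2 * L * (x * (y * (x + y))))) := by
    have hxy2 : 0 < (x - y) ^ 2 := by nlinarith
    exact div_pos (mul_pos hb2 hxy2) (by positivity)
  linarith

lemma gmid_strict {L b τ₁ τ₂ : ℝ} (hL : 0 < L) (hb : b ≠ 0) (h1 : 0 < τ₁) (h12 : τ₁ < τ₂)
    (ht : τ₁ < |b| / L) :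
    Qb L b (min ((τ₁ + τ₂) / 2) (|b| / L)) <
      (Qb L b (min τ₁ (|b| / L)) + Qb L b (min τ₂ (|b| / L))) / 2 := by
  set t := |b| / L with htdef
  set m := (τ₁ + τ₂) / 2 with hmdef
  set u := min τ₂ t with hudef
  set v := min m t with hvdef
  have ht0 : 0 < t := div_pos (abs_pos.mpr hb) hL
  have hu1 : τ₁ < u := lt_min h12 ht
  have hu2 : u ≤ t := min_le_right _ _
  have hv2 : v ≤ t := min_le_right _ _
  have hw0 : 0 < (τ₁ + u) / 2 := by linarith
  have hwv : (τ₁ + u) / 2 ≤ v := by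
    rcases le_total m t with h | h
    · rw [hvdef, min_eq_left h, hmdef]
      have : u ≤ τ₂ := min_le_left _ _
      linarith
    · rw [hvdef, min_eq_right h]
      linarith
  have hQ1 : Qb L b v ≤ Qb L b ((τ₁ + u) / 2) := Qb_anti hL hw0 hwv hv2
  have hQ2 : Qb L b ((τ₁ + u) / 2) < (Qb L b τ₁ + Qb L b u) / 2 :=
    Qb_strict_mid hL hb h1 hu1
  rw [min_eq_left ht.le]
  linarith

lemma gmid_le {L b τ₁ τ₂ : ℝ} (hL : 0 < L) (hb : b ≠ 0) (h1 : 0 < τ₁) (h12 : τ₁ < τ₂) :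
    Qb L b (min ((τ₁ + τ₂) / 2) (|b| / L)) ≤
      (Qb L b (min τ₁ (|b| / L)) + Qb L b (min τ₂ (|b| / L))) / 2 := by
  rcases lt_or_ge τ₁ (|b| / L) with h | h
  · exact (gmid_strict hL hb h1 h12 h).le
  · have hm : |b| / L ≤ (τ₁ + τ₂) / 2 := by linarith
    rw [min_eq_right h, min_eq_right hm, min_eq_right (by linarith : |b| / L ≤ τ₂)]
    ring_nf
    exact le_refl _


noncomputable def Gfun (L γ : ℝ) (p p₀ : ℕ) (β : Fin p → ℝ) (τ : ℝ) : ℝ :=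
  (∑ j : Fin p, |β j| ^ γ) * τ +
    ∑ j ∈ Finset.univ.filter (fun j : Fin p => (j : ℕ) < p₀),
      Qb L (β j) (min τ (|β j| / L)) / |β j| ^ γ

section Main

variable {L γ : ℝ} {p p₀ : ℕ} {β : Fin p → ℝ}

lemma Gfun_key (hL : 0 < L) (hγ : 0 < γ) (hp₀ : 1 ≤ p₀) (hp : p₀ ≤ p)
    (hnz : ∀ j : Fin p, (j : ℕ) < p₀ → β j ≠ 0) :
    ∀ a b : ℝ, 0 < a → a < b →
      (∀ τ, 0 < τ → Gfun L γ p p₀ β a ≤ Gfun L γ p p₀ β τ) →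
      (∀ τ, 0 < τ → Gfun L γ p p₀ β b ≤ Gfun L γ p p₀ β τ) → False := by
  intro a b ha hab hmina hminb
  have hb0 : 0 < b := ha.trans hab
  set s := Finset.univ.filter (fun j : Fin p => (j : ℕ) < p₀) with hs
  have hbne : ∀ j ∈ s, β j ≠ 0 := fun j hj => hnz j (Finset.mem_filter.mp hj).2
  have hc : ∀ j ∈ s, 0 < |β j| ^ γ := fun j hj =>
    Real.rpow_pos_of_pos (abs_pos.mpr (hbne j hj)) γ
  set A := ∑ j : Fin p, |β j| ^ γ with hA
  have hGdef : ∀ τ, Gfun L γ p p₀ β τ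
      = A * τ + ∑ j ∈ s, Qb L (β j) (min τ (|β j| / L)) / |β j| ^ γ := fun τ => rfl
  have hGab : Gfun L γ p p₀ β a = Gfun L γ p p₀ β b :=
    le_antisymm (hmina b hb0) (hminb a ha)
  set m := (a + b) / 2 with hm
  have hm0 : 0 < m := by positivity
  have hGm : Gfun L γ p p₀ β a ≤ Gfun L γ p p₀ β m := hmina m hm0
  by_cases hcase : ∃ j ∈ s, a < |β j| / L
  · obtain ⟨j₁, hj₁, hj₁t⟩ := hcase
    have hsum : ∑ j ∈ s, Qb L (β j) (min m (|β j| / L)) / |β j| ^ γ <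
        ∑ j ∈ s, ((Qb L (β j) (min a (|β j| / L)) + Qb L (β j) (min b (|β j| / L))) / 2)
          / |β j| ^ γ := by
      apply Finset.sum_lt_sum
      · intro j hj
        exact div_le_div_of_nonneg_right (gmid_le hL (hbne j hj) ha hab) (hc j hj).le
      · exact ⟨j₁, hj₁,
          (div_lt_div_iff_of_pos_right (hc j₁ hj₁)).mpr (gmid_strict hL (hbne j₁ hj₁) ha hab hj₁t)⟩
    have hsplit : ∑ j ∈ s,
        ((Qb L (β j) (min a (|β j| / L)) + Qb L (β j) (min b (|β j| / L))) / 2) / |β j| ^ γ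
        = ((∑ j ∈ s, Qb L (β j) (min a (|β j| / L)) / |β j| ^ γ)
          + ∑ j ∈ s, Qb L (β j) (min b (|β j| / L)) / |β j| ^ γ) / 2 := by
      rw [← Finset.sum_add_distrib, Finset.sum_div]
      exact Finset.sum_congr rfl fun j _ => by ring
    rw [hGdef a, hGdef b] at hGab
    rw [hGdef a, hGdef m] at hGm
    rw [hsplit] at hsum
    have hAm : A * m = (A * a + A * b) / 2 := by rw [hm]; ring
    linarith
  · push_neg at hcase
    have hsum_eq : (∑ j ∈ s, Qb L (β j) (min b (|β j| / L)) / |β j| ^ γ)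
        = ∑ j ∈ s, Qb L (β j) (min a (|β j| / L)) / |β j| ^ γ :=
      Finset.sum_congr rfl (fun j hj => by
        rw [min_eq_right (hcase j hj), min_eq_right ((hcase j hj).trans hab.le)])
    have h0p : 0 < p := lt_of_lt_of_le hp₀ hp
    have hApos : 0 < A := by
      rw [hA]
      apply Finset.sum_pos' (fun j _ => Real.rpow_nonneg (abs_nonneg _) γ)
      exact ⟨⟨0, h0p⟩, Finset.mem_univ _,
        Real.rpow_pos_of_pos (abs_pos.mpr (hnz ⟨0, h0p⟩ hp₀)) γ⟩
    have hba := hminb a ha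
    rw [hGdef a, hGdef b, hsum_eq] at hba
    nlinarith [mul_pos hApos (sub_pos.mpr hab)]

lemma Gfun_exists (hL : 0 < L) (hγ : 0 < γ) (hp₀ : 1 ≤ p₀) (hp : p₀ ≤ p)
    (hnz : ∀ j : Fin p, (j : ℕ) < p₀ → β j ≠ 0) :
    ∃ τs : ℝ, 0 < τs ∧ ∀ τ, 0 < τ → Gfun L γ p p₀ β τs ≤ Gfun L γ p p₀ β τ := by
  set s := Finset.univ.filter (fun j : Fin p => (j : ℕ) < p₀) with hs
  have hbne : ∀ j ∈ s, β j ≠ 0 := fun j hj => hnz j (Finset.mem_filter.mp hj).2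
  have hc : ∀ j ∈ s, 0 < |β j| ^ γ := fun j hj =>
    Real.rpow_pos_of_pos (abs_pos.mpr (hbne j hj)) γ
  set A := ∑ j : Fin p, |β j| ^ γ with hA
  have hGdef : ∀ τ, Gfun L γ p p₀ β τ
      = A * τ + ∑ j ∈ s, Qb L (β j) (min τ (|β j| / L)) / |β j| ^ γ := fun τ => rfl
  have h0p : 0 < p := lt_of_lt_of_le hp₀ hp
  set j₀ : Fin p := ⟨0, h0p⟩ with hj₀
  have hj₀s : j₀ ∈ s := Finset.mem_filter.mpr ⟨Finset.mem_univ _, hp₀⟩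
  have hb₀ : β j₀ ≠ 0 := hbne j₀ hj₀s
  have ht₀ : 0 < |β j₀| / L := div_pos (abs_pos.mpr hb₀) hL
  have hc₀ : 0 < |β j₀| ^ γ := hc j₀ hj₀s
  have hApos : 0 < A := by
    rw [hA]
    apply Finset.sum_pos' (fun j _ => Real.rpow_nonneg (abs_nonneg _) γ)
    exact ⟨j₀, Finset.mem_univ _, hc₀⟩
  have hSnonneg : ∀ τ : ℝ, 0 < τ →
      0 ≤ ∑ j ∈ s, Qb L (β j) (min τ (|β j| / L)) / |β j| ^ γ := by
    intro τ hτ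
    apply Finset.sum_nonneg
    intro j hj
    exact div_nonneg
      (Qb_nonneg hL (lt_min hτ (div_pos (abs_pos.mpr (hbne j hj)) hL))) (hc j hj).le
  have hGlb : ∀ τ : ℝ, 0 < τ → A * τ ≤ Gfun L γ p p₀ β τ := by
    intro τ hτ
    rw [hGdef]
    linarith [hSnonneg τ hτ]
  set K := Gfun L γ p p₀ β 1 with hK
  have hK0 : 0 ≤ K := by
    have h1 := hGlb 1 one_pos
    nlinarith
  have hsmall : ∀ τ : ℝ, 0 < τ → τ ≤ |β j₀| / L →
      (β j₀) ^ 2 / (2 * L * τ) / |β j₀| ^ γ ≤ Gfun L γ p p₀ β τ := by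
    intro τ hτ hτt
    have h1 : Qb L (β j₀) (min τ (|β j₀| / L)) / |β j₀| ^ γ ≤
        ∑ j ∈ s, Qb L (β j) (min τ (|β j| / L)) / |β j| ^ γ :=
      Finset.single_le_sum (fun j hj => div_nonneg
        (Qb_nonneg hL (lt_min hτ (div_pos (abs_pos.mpr (hbne j hj)) hL))) (hc j hj).le) hj₀s
    rw [min_eq_left hτt] at h1
    have h2 : (β j₀) ^ 2 / (2 * L * τ) / |β j₀| ^ γ ≤ Qb L (β j₀) τ / |β j₀| ^ γ :=
      div_le_div_of_nonneg_right (Qb_ge hL hτ) hc₀.le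
    rw [hGdef]
    have hAτ : 0 ≤ A * τ := mul_nonneg hApos.le hτ.le
    linarith
  have hb₀2 : 0 < (β j₀) ^ 2 :=
    lt_of_le_of_ne (sq_nonneg _) (Ne.symm (pow_ne_zero 2 hb₀))
  have hden : 0 < 2 * L * |β j₀| ^ γ * (K + 1) :=
    mul_pos (by positivity) (by linarith)
  set δ := (β j₀) ^ 2 / (2 * L * |β j₀| ^ γ * (K + 1)) with hδ
  have hδ0 : 0 < δ := div_pos hb₀2 hden
  set ε := min 1 (min (|β j₀| / L) δ) with hε
  have hε0 : 0 < ε := lt_min one_pos (lt_min ht₀ hδ0)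
  set M := max 1 ((K + 1) / A) with hM
  have h1mem : (1 : ℝ) ∈ Set.Icc ε M := ⟨min_le_left _ _, le_max_left _ _⟩
  have hcont : ContinuousOn (Gfun L γ p p₀ β) (Set.Icc ε M) := by
    have hfun : Gfun L γ p p₀ β
        = fun τ => A * τ + ∑ j ∈ s, Qb L (β j) (min τ (|β j| / L)) / |β j| ^ γ :=
      funext hGdef
    rw [hfun]
    apply ContinuousOn.add (continuousOn_const.mul continuousOn_id)
    apply continuousOn_finset_sum
    intro j hj
    have htj : 0 < |β j| / L := div_pos (abs_pos.mpr (hbne j hj)) hL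
    have hmin : ContinuousOn (fun τ : ℝ => min τ (|β j| / L)) (Set.Icc ε M) :=
      (continuous_id.min continuous_const).continuousOn
    have hne : ∀ x ∈ Set.Icc ε M, min x (|β j| / L) ≠ 0 := fun x hx =>
      ne_of_gt (lt_min (lt_of_lt_of_le hε0 hx.1) htj)
    show ContinuousOn
      (fun τ => ((β j) ^ 2 / min τ (|β j| / L) + L ^ 2 * min τ (|β j| / L)) / (2 * L)
        / |β j| ^ γ) (Set.Icc ε M)
    exact (((continuousOn_const.div hmin hne).add
      (continuousOn_const.mul hmin)).div_const _).div_const _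
  obtain ⟨τs, hτsmem, hminOn⟩ := isCompact_Icc.exists_isMinOn ⟨1, h1mem⟩ hcont
  have hτs0 : 0 < τs := lt_of_lt_of_le hε0 hτsmem.1
  refine ⟨τs, hτs0, ?_⟩
  intro τ hτ
  by_cases hmem : τ ∈ Set.Icc ε M
  · exact isMinOn_iff.mp hminOn τ hmem
  · have hKτs : Gfun L γ p p₀ β τs ≤ K := isMinOn_iff.mp hminOn 1 h1mem
    suffices h : K + 1 ≤ Gfun L γ p p₀ β τ by linarith
    rw [Set.mem_Icc, not_and_or] at hmem
    push_neg at hmem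
    rcases hmem with hlt | hgt
    · have hτδ : τ ≤ δ :=
        le_of_lt (lt_of_lt_of_le hlt ((min_le_right 1 _).trans (min_le_right _ δ)))
      have hτt : τ ≤ |β j₀| / L :=
        le_of_lt (lt_of_lt_of_le hlt ((min_le_right 1 _).trans (min_le_left _ δ)))
      have hsm := hsmall τ hτ hτt
      suffices hKb : K + 1 ≤ (β j₀) ^ 2 / (2 * L * τ) / |β j₀| ^ γ by linarith
      rw [div_div, le_div_iff₀ (by positivity)]
      rw [hδ, le_div_iff₀ hden] at hτδ
      nlinarith [hτδ]
    · have h2 : (K + 1) / A ≤ τ := le_trans (le_max_right _ _) hgt.le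
      rw [div_le_iff₀ hApos] at h2
      have h3 := hGlb τ hτ
      nlinarith

end Main

theorem berhu_scale_unique_min (L γ : ℝ) (hL : 0 < L) (hγ : 0 < γ)
    (p p₀ : ℕ) (hp₀ : 1 ≤ p₀) (hp : p₀ ≤ p) (β : Fin p → ℝ)
    (hnz : ∀ j : Fin p, (j : ℕ) < p₀ → β j ≠ 0)
    (hz : ∀ j : Fin p, p₀ ≤ (j : ℕ) → β j = 0) :
    ∃ τstar : ℝ, 0 < τstar ∧
      (∀ τ : ℝ, 0 < τ →
        τstar * ((∑ j : Fin p, |β j| ^ γ) +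
            ∑ j ∈ Finset.univ.filter (fun j : Fin p => (j : ℕ) < p₀),
              berhu L (β j / τstar) / |β j| ^ γ) ≤
          τ * ((∑ j : Fin p, |β j| ^ γ) +
            ∑ j ∈ Finset.univ.filter (fun j : Fin p => (j : ℕ) < p₀),
              berhu L (β j / τ) / |β j| ^ γ)) ∧
      ∀ τ' : ℝ, 0 < τ' →
        (∀ τ : ℝ, 0 < τ →
          τ' * ((∑ j : Fin p, |β j| ^ γ) +
              ∑ j ∈ Finset.univ.filter (fun j : Fin p => (j : ℕ) < p₀),
                berhu L (β j / τ') / |β j| ^ γ) ≤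
            τ * ((∑ j : Fin p, |β j| ^ γ) +
              ∑ j ∈ Finset.univ.filter (fun j : Fin p => (j : ℕ) < p₀),
                berhu L (β j / τ) / |β j| ^ γ)) → τ' = τstar := by
  obtain ⟨τs, hτs0, hglob⟩ := Gfun_exists hL hγ hp₀ hp hnz
  have hFG : ∀ τ : ℝ, 0 < τ →
      τ * ((∑ j : Fin p, |β j| ^ γ) +
        ∑ j ∈ Finset.univ.filter (fun j : Fin p => (j : ℕ) < p₀),
          berhu L (β j / τ) / |β j| ^ γ) = Gfun L γ p p₀ β τ := by
    intro τ hτ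
    unfold Gfun
    rw [mul_add]
    congr 1
    · ring
    rw [Finset.mul_sum]
    apply Finset.sum_congr rfl
    intro j hj
    have hbj : β j ≠ 0 := hnz j (Finset.mem_filter.mp hj).2
    rw [← mul_div_assoc, berhu_mul hL hbj hτ]
  refine ⟨τs, hτs0, ?_, ?_⟩
  · intro τ hτ
    rw [hFG τs hτs0, hFG τ hτ]
    exact hglob τ hτ
  · intro τ' hτ' hmin'
    have hm' : ∀ τ, 0 < τ → Gfun L γ p p₀ β τ' ≤ Gfun L γ p p₀ β τ := by
      intro τ hτ
      rw [← hFG τ' hτ', ← hFG τ hτ]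
      exact hmin' τ hτ
    rcases lt_trichotomy τ' τs with h | h | h
    · exact (Gfun_key hL hγ hp₀ hp hnz τ' τs hτ' h hm' hglob).elim
    · exact h
    · exact (Gfun_key hL hγ hp₀ hp hnz τs τ' hτs0 h hglob hm').elim
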